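/- Let n ≥ 1 and let π be a Baxter permutation of {1, …, n+1}. Then A(π) is an n×n permutation matrix: every entry of A(π) is 0 or 1, and each row and each column contains exactly one entry equal to 1. -/

import Mathlib

/-- `(i,j)` is a box for the permutation `π` with inverse `σ`:
`min(π i, π (i+1)) ≤ j < max(π i, π (i+1))` and `min(σ j, σ (j+1)) ≤ i < max(σ j, σ (j+1))`. -/
def IsBox (π σ : ℕ → ℕ) (i j : ℕ) : Prop :=
  min (π i) (π (i+1)) ≤ j ∧ j < max (π i) (π (i+1)) ∧
  min (σ j) (σ (j+1)) ≤ i ∧ i < max (σ j) (σ (j+1))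

instance (π σ : ℕ → ℕ) (i j : ℕ) : Decidable (IsBox π σ i j) := by
  unfold IsBox; infer_instance

/-- A box `(i,j)` is windmilled if exactly one of `π i > j` and `σ j > i` holds. -/
def Windmilled (π σ : ℕ → ℕ) (i j : ℕ) : Prop :=
  IsBox π σ i j ∧ Xor' (j < π i) (i < σ j)

instance (π σ : ℕ → ℕ) (i j : ℕ) : Decidable (Windmilled π σ i j) := by
  unfold Windmilled; exact inferInstanceAs (Decidable (IsBox π σ i j ∧ Xor (j < π i) (i < σ j)))

/-- The matrix `A(π)`: `-1` on windmilled boxes, `1` on non-windmilled boxes, `0` elsewhere. -/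
def AMat (π σ : ℕ → ℕ) (i j : ℕ) : ℤ :=
  if Windmilled π σ i j then -1 else if IsBox π σ i j then 1 else 0

/-- Baxter condition (dividing-line form) for a permutation `π` of `{1, …, n+1}`
with inverse `σ`. -/
def IsBaxter (n : ℕ) (π σ : ℕ → ℕ) : Prop :=
  ∀ i ∈ Finset.Icc 1 n,
    ∃ c, min (π i) (π (i+1)) ≤ c ∧ c < max (π i) (π (i+1)) ∧
      ∀ d, min (π i) (π (i+1)) < d → d < max (π i) (π (i+1)) →
        (π i < π (i+1) → (d ≤ c → σ d < i) ∧ (c < d → σ d > i + 1)) ∧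
        (π (i+1) < π i → (d ≤ c → σ d > i + 1) ∧ (c < d → σ d < i))

lemma ivt (P : ℕ → Prop) : ∀ b a, a ≤ b → ¬ P a → P b →
    ∃ d, a ≤ d ∧ d < b ∧ ¬ P d ∧ P (d+1) := by
  intro b
  induction b with
  | zero => intro a h h1 h2; interval_cases a; exact absurd h2 h1
  | succ b ih =>
    intro a hab h1 h2
    have hab' : a ≤ b := by
      rcases Nat.lt_or_ge a (b+1) with h | h
      · omega
      · exfalso; have : a = b + 1 := by omega
        exact h1 (this ▸ h2)
    by_cases hb : P b
    · obtain ⟨d, hd⟩ := ih a hab' h1 hb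
      exact ⟨d, hd.1, by omega, hd.2.2⟩
    · exact ⟨b, hab', by omega, hb, h2⟩

lemma straddle {n : ℕ} {π : Equiv.Perm ℕ} (hbax : IsBaxter n ⇑π ⇑π.symm)
    {i j : ℕ} (hi : i ∈ Finset.Icc 1 n) (hbox : IsBox ⇑π ⇑π.symm i j) :
    (π i ≤ j ∧ j < π (i+1) ∧ π.symm j ≤ i ∧ i+1 ≤ π.symm (j+1)) ∨
    (π (i+1) ≤ j ∧ j < π i ∧ π.symm (j+1) ≤ i ∧ i+1 ≤ π.symm j) := by
  obtain ⟨c, hc1, hc2, hc3⟩ := hbax i hi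
  obtain ⟨hb1, hb2, hb3, hb4⟩ := hbox
  have hne : π i ≠ π (i+1) := fun h => by
    have := π.injective h; omega
  have e1 : π.symm (π i) = i := π.symm_apply_apply i
  have e2 : π.symm (π (i+1)) = i+1 := π.symm_apply_apply (i+1)
  have hb3' : π.symm j ≤ i ∨ π.symm (j+1) ≤ i := min_le_iff.mp hb3
  have hb4' : i < π.symm j ∨ i < π.symm (j+1) := lt_max_iff.mp hb4
  rcases lt_or_gt_of_ne hne with hlt | hlt
  · rw [min_eq_left hlt.le] at hb1 hc1
    rw [max_eq_right hlt.le] at hb2 hc2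
    rw [min_eq_left hlt.le, max_eq_right hlt.le] at hc3
    have hσj : π.symm j = i ∨ (j ≤ c ∧ π.symm j < i) ∨ (c < j ∧ π.symm j > i+1) := by
      rcases eq_or_ne j (π i) with h | h
      · left; rw [h, e1]
      · have hd := (hc3 j (by omega) hb2).1 hlt
        omega
    have hσj1 : π.symm (j+1) = i+1 ∨ (j+1 ≤ c ∧ π.symm (j+1) < i) ∨
        (c < j+1 ∧ π.symm (j+1) > i+1) := by
      rcases eq_or_ne (j+1) (π (i+1)) with h | h
      · left; rw [h, e2]
      · have hd := (hc3 (j+1) (by omega) (by omega)).1 hlt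
        omega
    left; omega
  · rw [min_eq_right hlt.le] at hb1 hc1
    rw [max_eq_left hlt.le] at hb2 hc2
    rw [min_eq_right hlt.le, max_eq_left hlt.le] at hc3
    have hσj : π.symm j = i+1 ∨ (j ≤ c ∧ π.symm j > i+1) ∨ (c < j ∧ π.symm j < i) := by
      rcases eq_or_ne j (π (i+1)) with h | h
      · left; rw [h, e2]
      · have hd := (hc3 j (by omega) hb2).2 hlt
        omega
    have hσj1 : π.symm (j+1) = i ∨ (j+1 ≤ c ∧ π.symm (j+1) > i+1) ∨
        (c < j+1 ∧ π.symm (j+1) < i) := by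
      rcases eq_or_ne (j+1) (π i) with h | h
      · left; rw [h, e1]
      · have hd := (hc3 (j+1) (by omega) (by omega)).2 hlt
        omega
    right; omega

lemma rowEx {n : ℕ} {π : Equiv.Perm ℕ}
    (hπ : ∀ k ∈ Finset.Icc 1 (n+1), π k ∈ Finset.Icc 1 (n+1))
    (hbax : IsBaxter n ⇑π ⇑π.symm) {i : ℕ} (hi : i ∈ Finset.Icc 1 n) :
    ∃ j, j ∈ Finset.Icc 1 n ∧ IsBox ⇑π ⇑π.symm i j := by
  obtain ⟨c, hc1, hc2, hc3⟩ := hbax i hi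
  have hi' := Finset.mem_Icc.mp hi
  have ha := Finset.mem_Icc.mp (hπ i (Finset.mem_Icc.mpr ⟨hi'.1, by omega⟩))
  have hb := Finset.mem_Icc.mp (hπ (i+1) (Finset.mem_Icc.mpr ⟨by omega, by omega⟩))
  have hne : π i ≠ π (i+1) := fun h => by
    have := π.injective h; omega
  have e1 : π.symm (π i) = i := π.symm_apply_apply i
  have e2 : π.symm (π (i+1)) = i+1 := π.symm_apply_apply (i+1)
  have key : (π.symm c ≤ i ∧ i+1 ≤ π.symm (c+1)) ∨
      (π.symm (c+1) ≤ i ∧ i+1 ≤ π.symm c) := by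
    rcases lt_or_gt_of_ne hne with hlt | hlt
    · rw [min_eq_left hlt.le] at hc1
      rw [max_eq_right hlt.le] at hc2
      rw [min_eq_left hlt.le, max_eq_right hlt.le] at hc3
      left
      constructor
      · rcases eq_or_ne c (π i) with h | h
        · rw [h, e1]
        · exact le_of_lt (((hc3 c (by omega) hc2).1 hlt).1 le_rfl)
      · rcases eq_or_ne (c+1) (π (i+1)) with h | h
        · rw [h, e2]
        · exact le_of_lt (((hc3 (c+1) (by omega) (by omega)).1 hlt).2 (by omega))
    · rw [min_eq_right hlt.le] at hc1
      rw [max_eq_left hlt.le] at hc2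
      rw [min_eq_right hlt.le, max_eq_left hlt.le] at hc3
      right
      constructor
      · rcases eq_or_ne (c+1) (π i) with h | h
        · rw [h, e1]
        · exact le_of_lt (((hc3 (c+1) (by omega) (by omega)).2 hlt).2 (by omega))
      · rcases eq_or_ne c (π (i+1)) with h | h
        · rw [h, e2]
        · exact le_of_lt (((hc3 c (by omega) hc2).2 hlt).1 le_rfl)
  refine ⟨c, Finset.mem_Icc.mpr ⟨?_, ?_⟩, hc1, hc2, ?_, ?_⟩
  · exact le_trans (le_min ha.1 hb.1) hc1
  · have := lt_of_lt_of_le hc2 (max_le ha.2 hb.2); omega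
  · rcases key with ⟨h1, _⟩ | ⟨h1, _⟩
    · exact le_trans (min_le_left _ _) h1
    · exact le_trans (min_le_right _ _) h1
  · rcases key with ⟨_, h2⟩ | ⟨_, h2⟩
    · exact lt_of_lt_of_le h2 (le_max_right _ _)
    · exact lt_of_lt_of_le h2 (le_max_left _ _)

lemma boxVal {n : ℕ} {π : Equiv.Perm ℕ} (hbax : IsBaxter n ⇑π ⇑π.symm)
    {i j : ℕ} (hi : i ∈ Finset.Icc 1 n) (hbox : IsBox ⇑π ⇑π.symm i j) :
    AMat ⇑π ⇑π.symm i j = 1 := by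
  have hs := straddle hbax hi hbox
  have hw : ¬ Windmilled ⇑π ⇑π.symm i j := by
    rintro ⟨-, hx⟩
    rcases hx with ⟨h1, h2⟩ | ⟨h1, h2⟩ <;>
      rcases hs with ⟨a1, a2, a3, a4⟩ | ⟨a1, a2, a3, a4⟩ <;> omega
  unfold AMat
  rw [if_neg hw, if_pos hbox]

lemma one_box (π σ : ℕ → ℕ) (i j : ℕ) (h : AMat π σ i j = 1) : IsBox π σ i j := by
  unfold AMat at h
  by_cases h1 : Windmilled π σ i j
  · rw [if_pos h1] at h; omega
  · rw [if_neg h1] at h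
    by_cases h2 : IsBox π σ i j
    · exact h2
    · rw [if_neg h2] at h; omega

lemma noTwoRow {n : ℕ} {π : Equiv.Perm ℕ} (hbax : IsBaxter n ⇑π ⇑π.symm)
    {i j j' : ℕ} (hi : i ∈ Finset.Icc 1 n) (h1 : IsBox ⇑π ⇑π.symm i j)
    (h2 : IsBox ⇑π ⇑π.symm i j') (hlt : j < j') : False := by
  have s1 := straddle hbax hi h1
  have s2 := straddle hbax hi h2
  rcases s1 with ⟨a1, a2, a3, a4⟩ | ⟨a1, a2, a3, a4⟩ <;>
    rcases s2 with ⟨b1, b2, b3, b4⟩ | ⟨b1, b2, b3, b4⟩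
  · obtain ⟨d, hd1, hd2, hd3, hd4⟩ :=
      ivt (fun d => π.symm d ≤ i) j' (j+1) (by omega) (by omega) b3
    have hbox : IsBox ⇑π ⇑π.symm i d :=
      ⟨le_trans (min_le_left _ _) (by omega),
       lt_of_lt_of_le (show d < π (i+1) by omega) (le_max_right _ _),
       le_trans (min_le_right _ _) hd4,
       lt_of_lt_of_le (show i < π.symm d by omega) (le_max_left _ _)⟩
    rcases straddle hbax hi hbox with ⟨c1, c2, c3, c4⟩ | ⟨c1, c2, c3, c4⟩ <;> omega
  · omega
  · omega
  · obtain ⟨d, hd1, hd2, hd3, hd4⟩ :=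
      ivt (fun d => i + 1 ≤ π.symm d) j' (j+1) (by omega) (by omega) b4
    have hbox : IsBox ⇑π ⇑π.symm i d :=
      ⟨le_trans (min_le_right _ _) (by omega),
       lt_of_lt_of_le (show d < π i by omega) (le_max_left _ _),
       le_trans (min_le_left _ _) (by omega),
       lt_of_lt_of_le (show i < π.symm (d+1) by omega) (le_max_right _ _)⟩
    rcases straddle hbax hi hbox with ⟨c1, c2, c3, c4⟩ | ⟨c1, c2, c3, c4⟩ <;> omega

lemma noTwoCol {n : ℕ} {π : Equiv.Perm ℕ} (hbax : IsBaxter n ⇑π ⇑π.symm)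
    {i i' j : ℕ} (hi : i ∈ Finset.Icc 1 n) (hi' : i' ∈ Finset.Icc 1 n)
    (h1 : IsBox ⇑π ⇑π.symm i j) (h2 : IsBox ⇑π ⇑π.symm i' j) (hlt : i < i') : False := by
  have s1 := straddle hbax hi h1
  have s2 := straddle hbax hi' h2
  have hii := Finset.mem_Icc.mp hi
  have hii' := Finset.mem_Icc.mp hi'
  rcases s1 with ⟨a1, a2, a3, a4⟩ | ⟨a1, a2, a3, a4⟩ <;>
    rcases s2 with ⟨b1, b2, b3, b4⟩ | ⟨b1, b2, b3, b4⟩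
  · obtain ⟨r, hr1, hr2, hr3, hr4⟩ :=
      ivt (fun r => π r ≤ j) i' (i+1) (by omega) (by omega) b1
    have hrm : r ∈ Finset.Icc 1 n := Finset.mem_Icc.mpr ⟨by omega, by omega⟩
    have hbox : IsBox ⇑π ⇑π.symm r j :=
      ⟨le_trans (min_le_right _ _) hr4,
       lt_of_lt_of_le (show j < π r by omega) (le_max_left _ _),
       le_trans (min_le_left _ _) (by omega),
       lt_of_lt_of_le (show r < π.symm (j+1) by omega) (le_max_right _ _)⟩
    rcases straddle hbax hrm hbox with ⟨c1, c2, c3, c4⟩ | ⟨c1, c2, c3, c4⟩ <;> omega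
  · omega
  · omega
  · obtain ⟨r, hr1, hr2, hr3, hr4⟩ :=
      ivt (fun r => j < π r) i' (i+1) (by omega) (by omega) b2
    have hrm : r ∈ Finset.Icc 1 n := Finset.mem_Icc.mpr ⟨by omega, by omega⟩
    have hbox : IsBox ⇑π ⇑π.symm r j :=
      ⟨le_trans (min_le_left _ _) (by omega),
       lt_of_lt_of_le (show j < π (r+1) by omega) (le_max_right _ _),
       le_trans (min_le_right _ _) (by omega),
       lt_of_lt_of_le (show r < π.symm j by omega) (le_max_left _ _)⟩
    rcases straddle hbax hrm hbox with ⟨c1, c2, c3, c4⟩ | ⟨c1, c2, c3, c4⟩ <;> omega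

set_option linter.unusedVariables false in
theorem stmt8 (n : ℕ) (hn : 1 ≤ n) (π : Equiv.Perm ℕ)
    (hπ : ∀ k ∈ Finset.Icc 1 (n+1), π k ∈ Finset.Icc 1 (n+1))
    (hbax : IsBaxter n (⇑π) (⇑π.symm)) :
    (∀ i ∈ Finset.Icc 1 n, ∀ j ∈ Finset.Icc 1 n,
        AMat (⇑π) (⇑π.symm) i j = 0 ∨ AMat (⇑π) (⇑π.symm) i j = 1) ∧
    (∀ i ∈ Finset.Icc 1 n, ∃! j, j ∈ Finset.Icc 1 n ∧ AMat (⇑π) (⇑π.symm) i j = 1) ∧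
    (∀ j ∈ Finset.Icc 1 n, ∃! i, i ∈ Finset.Icc 1 n ∧ AMat (⇑π) (⇑π.symm) i j = 1) := by
  refine ⟨?_, ?_, ?_⟩
  · intro i hi j _
    by_cases hb : IsBox ⇑π ⇑π.symm i j
    · exact Or.inr (boxVal hbax hi hb)
    · left; unfold AMat
      rw [if_neg (fun hw => hb hw.1), if_neg hb]
  · intro i hi
    obtain ⟨j, hj, hb⟩ := rowEx hπ hbax hi
    refine ⟨j, ⟨hj, boxVal hbax hi hb⟩, ?_⟩
    rintro y ⟨hy, hv⟩
    have hby := one_box _ _ _ _ hv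
    rcases lt_trichotomy y j with h | h | h
    · exact (noTwoRow hbax hi hby hb h).elim
    · exact h
    · exact (noTwoRow hbax hi hb hby h).elim
  · intro j hj
    have key := Finset.surj_on_of_inj_on_of_card_le
      (s := Finset.Icc 1 n) (t := Finset.Icc 1 n)
      (fun a ha => (rowEx hπ hbax ha).choose)
      (fun a ha => (rowEx hπ hbax ha).choose_spec.1)
      (fun a b ha hb heq => by
        have sa := (rowEx hπ hbax ha).choose_spec.2
        have sb := (rowEx hπ hbax hb).choose_spec.2
        beta_reduce at heq
        rw [heq] at sa
        rcases lt_trichotomy a b with h | h | h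
        · exact (noTwoCol hbax ha hb sa sb h).elim
        · exact h
        · exact (noTwoCol hbax hb ha sb sa h).elim)
      le_rfl j hj
    obtain ⟨i, hi, hij⟩ := key
    have hbox := (rowEx hπ hbax hi).choose_spec.2
    beta_reduce at hij
    rw [← hij] at hbox
    refine ⟨i, ⟨hi, boxVal hbax hi hbox⟩, ?_⟩
    rintro y ⟨hy, hv⟩
    have hby := one_box _ _ _ _ hv
    rcases lt_trichotomy y i with h | h | h
    · exact (noTwoCol hbax hy hi hby hbox h).elim
    · exact h
    · exact (noTwoCol hbax hi hy hbox hby h).elim
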